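/- Let q : [0,1] → [0, q_max] be nonincreasing, let r(x) = p(x)q(x), and suppose for every c the local first-order condition r′(c) − c·q′(c) = 0 holds (wherever differentiable, with q, r piecewise differentiable). Then the global incentive compatibility condition holds: for all c, y ∈ [0,1], r(c) − c·q(c) ≥ r(y) − c·q(y). -/
import Mathlib


open Set Filter Topology

/-- Let `q : [0,1] → [0, qmax]` be nonincreasing, let
`r x = p x * q x`, and suppose the local first-order condition
`r' c - c * q' c = 0` holds for every `c ∈ [0,1]` (with `q, r` differentiable
with derivatives `q'`, `r'`). Then global incentive compatibility holds:
for all `c, y ∈ [0,1]`, `r c - c * q c ≥ r y - c * q y`. -/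
theorem stmt_6 (qmax : ℝ) (p q r q' r' : ℝ → ℝ)
    (hqmax : 0 < qmax)
    (hr : ∀ x, r x = p x * q x)
    (hrange : ∀ x ∈ Icc (0:ℝ) 1, q x ∈ Icc (0:ℝ) qmax)
    (hqd : ∀ c ∈ Icc (0:ℝ) 1, HasDerivAt q (q' c) c)
    (hrd : ∀ c ∈ Icc (0:ℝ) 1, HasDerivAt r (r' c) c)
    (hFOC : ∀ c ∈ Icc (0:ℝ) 1, r' c - c * q' c = 0)
    (hmono : AntitoneOn q (Icc 0 1)) :
    ∀ c ∈ Icc (0:ℝ) 1, ∀ y ∈ Icc (0:ℝ) 1,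
      r y - c * q y ≤ r c - c * q c := by
  -- First, q' is nonpositive on [0,1].
  have hq'np : ∀ x ∈ Icc (0:ℝ) 1, q' x ≤ 0 := by
    intro x hx
    have hslope := hasDerivAt_iff_tendsto_slope.1 (hqd x hx)
    rcases lt_or_eq_of_le hx.2 with hx1 | hx1
    · -- approach from the right
      have h1 : Tendsto (slope q x) (𝓝[>] x) (𝓝 (q' x)) :=
        hslope.mono_left (nhdsWithin_mono _ fun z hz => ne_of_gt hz)
      refine le_of_tendsto h1 ?_
      filter_upwards [Ioo_mem_nhdsGT_of_mem ⟨le_refl x, hx1⟩] with z hz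
      have hzI : z ∈ Icc (0:ℝ) 1 := ⟨le_trans hx.1 (le_of_lt hz.1), le_of_lt hz.2⟩
      have hq : q z ≤ q x := hmono hx hzI (le_of_lt hz.1)
      have : slope q x z = (q z - q x) / (z - x) := by
        rw [slope_def_field]
      rw [this]
      exact div_nonpos_of_nonpos_of_nonneg (by linarith) (by linarith [hz.1])
    · -- x = 1, approach from the left
      have h1 : Tendsto (slope q x) (𝓝[<] x) (𝓝 (q' x)) :=
        hslope.mono_left (nhdsWithin_mono _ fun z hz => ne_of_lt hz)
      refine le_of_tendsto h1 ?_
      filter_upwards [Ioo_mem_nhdsLT_of_mem (show x ∈ Ioc (0:ℝ) x from ⟨by linarith [hx.1, hx.2, hx1], le_refl x⟩)] with z hz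
      have hzI : z ∈ Icc (0:ℝ) 1 := ⟨le_of_lt hz.1, le_trans (le_of_lt hz.2) hx.2⟩
      have hq : q x ≤ q z := hmono hzI hx (le_of_lt hz.2)
      have : slope q x z = (q z - q x) / (z - x) := by
        rw [slope_def_field]
      rw [this]
      exact div_nonpos_of_nonneg_of_nonpos (by linarith) (by linarith [hz.2])
  intro c hc y hy
  set g : ℝ → ℝ := fun x => r x - c * q x with hg
  have hgd : ∀ x ∈ Icc (0:ℝ) 1, HasDerivAt g ((x - c) * q' x) x := by
    intro x hx
    have h := (hrd x hx).sub ((hqd x hx).const_mul c)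
    have hfoc := hFOC x hx
    have : r' x - c * q' x = (x - c) * q' x := by
      have : r' x = x * q' x := by linarith
      rw [this]; ring
    rwa [this] at h
  have hgc : ContinuousOn g (Icc 0 1) := fun x hx => ((hgd x hx).continuousAt).continuousWithinAt
  rcases le_total y c with hyc | hcy
  · -- g monotone on [y, c]
    have hsub : Icc y c ⊆ Icc (0:ℝ) 1 := Icc_subset_Icc hy.1 hc.2
    have hmon : MonotoneOn g (Icc y c) := by
      apply monotoneOn_of_deriv_nonneg (convex_Icc y c) (hgc.mono hsub)
      · intro x hx
        rw [interior_Icc] at hx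
        exact ((hgd x (hsub (Ioo_subset_Icc_self hx))).differentiableAt).differentiableWithinAt
      · intro x hx
        rw [interior_Icc] at hx
        have hxI : x ∈ Icc (0:ℝ) 1 := hsub (Ioo_subset_Icc_self hx)
        rw [(hgd x hxI).deriv]
        nlinarith [hq'np x hxI, hx.2]
    exact hmon (left_mem_Icc.2 hyc) (right_mem_Icc.2 hyc) hyc
  · -- g antitone on [c, y]
    have hsub : Icc c y ⊆ Icc (0:ℝ) 1 := Icc_subset_Icc hc.1 hy.2
    have hant : AntitoneOn g (Icc c y) := by
      apply antitoneOn_of_deriv_nonpos (convex_Icc c y) (hgc.mono hsub)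
      · intro x hx
        rw [interior_Icc] at hx
        exact ((hgd x (hsub (Ioo_subset_Icc_self hx))).differentiableAt).differentiableWithinAt
      · intro x hx
        rw [interior_Icc] at hx
        have hxI : x ∈ Icc (0:ℝ) 1 := hsub (Ioo_subset_Icc_self hx)
        rw [(hgd x hxI).deriv]
        exact mul_nonpos_of_nonneg_of_nonpos (by linarith [hx.1]) (hq'np x hxI)
    exact hant (left_mem_Icc.2 hcy) (right_mem_Icc.2 hcy) hcy
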